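/- With θ = dz - 2∑_{i=1}^{2m}(y_i dx_i - x_i dy_i), f_2 = e_2 + ∑_{a=1}^m (y_{2a-1}^2 + x_{2a-1}^2 - y_{2a}^2 - x_{2a}^2) and f_3 = e_3 + 2∑_{a=1}^m (y_{2a-1} y_{2a} + x_{2a-1} x_{2a}), one has I_2(dz) = df_2 and I_3(dz) = df_3, where I_2, I_3 act on 1-forms dually to the hypercomplex structure. -/

import Mathlib

/-- Points of `ℝ^{4m+4}` with coordinates `(x, y, z, e)`, where
`x (a, 0) = x_{2a-1}`, `x (a, 1) = x_{2a}` and similarly for `y`. -/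
abbrev Pt (m : ℕ) := (Fin m × Fin 2 → ℝ) × (Fin m × Fin 2 → ℝ) × ℝ × (Fin 3 → ℝ)

/-- The coordinate 1-form `dx_i`. -/
def dxL (m : ℕ) (i : Fin m × Fin 2) : Pt m →ₗ[ℝ] ℝ where
  toFun p := p.1 i
  map_add' _ _ := rfl
  map_smul' _ _ := rfl

/-- The coordinate 1-form `dy_i`. -/
def dyL (m : ℕ) (i : Fin m × Fin 2) : Pt m →ₗ[ℝ] ℝ where
  toFun p := p.2.1 i
  map_add' _ _ := rfl
  map_smul' _ _ := rfl

/-- The coordinate 1-form `dz`. -/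
def dzL (m : ℕ) : Pt m →ₗ[ℝ] ℝ where
  toFun p := p.2.2.1
  map_add' _ _ := rfl
  map_smul' _ _ := rfl

/-- The coordinate 1-form `de_k`. -/
def deL (m : ℕ) (k : Fin 3) : Pt m →ₗ[ℝ] ℝ where
  toFun p := p.2.2.2 k
  map_add' _ _ := rfl
  map_smul' _ _ := rfl

/-- The invariant 1-form `θ = dz - 2∑ᵢ (yᵢ dxᵢ - xᵢ dyᵢ)` at the point `p`. -/
noncomputable def thetaL (m : ℕ) (p : Pt m) : Pt m →ₗ[ℝ] ℝ :=
  dzL m - (2 : ℝ) • ∑ i : Fin m × Fin 2, (p.2.1 i • dxL m i - p.1 i • dyL m i)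

/-- `f₂ = e₂ + ∑ₐ (y_{2a-1}² + x_{2a-1}² - y_{2a}² - x_{2a}²)`. -/
def f2 (m : ℕ) (p : Pt m) : ℝ :=
  p.2.2.2 1 + ∑ a : Fin m,
    (p.2.1 (a, 0) ^ 2 + p.1 (a, 0) ^ 2 - p.2.1 (a, 1) ^ 2 - p.1 (a, 1) ^ 2)

/-- `f₃ = e₃ + 2 ∑ₐ (y_{2a-1} y_{2a} + x_{2a-1} x_{2a})`. -/
def f3 (m : ℕ) (p : Pt m) : ℝ :=
  p.2.2.2 2 + 2 * ∑ a : Fin m,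
    (p.2.1 (a, 0) * p.2.1 (a, 1) + p.1 (a, 0) * p.1 (a, 1))

set_option maxHeartbeats 1000000 in
/-- At every point `p`, if `J₂` and `J₃` are the actions of `I₂` resp. `I₃` on
1-forms (determined on the coframe `{dxᵢ, dyᵢ, θ, deₖ}` as in the context),
then `I₂(dz) = df₂` and `I₃(dz) = df₃`. -/
theorem I2_I3_dz_exact (m : ℕ) (p : Pt m)
    (J2 J3 : (Pt m →ₗ[ℝ] ℝ) →ₗ[ℝ] (Pt m →ₗ[ℝ] ℝ))
    -- I₂ on the coframe
    (h2x1 : ∀ a : Fin m, J2 (dxL m (a, 0)) = dyL m (a, 0))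
    (h2x2 : ∀ a : Fin m, J2 (dxL m (a, 1)) = -dyL m (a, 1))
    (h2y1 : ∀ a : Fin m, J2 (dyL m (a, 0)) = -dxL m (a, 0))
    (h2y2 : ∀ a : Fin m, J2 (dyL m (a, 1)) = dxL m (a, 1))
    (h2θ : J2 (thetaL m p) = deL m 1)
    (h2e2 : J2 (deL m 1) = -thetaL m p)
    (h2e1 : J2 (deL m 0) = -deL m 2)
    (h2e3 : J2 (deL m 2) = deL m 0)
    -- I₃ on the coframe
    (h3x1 : ∀ a : Fin m, J3 (dxL m (a, 0)) = dyL m (a, 1))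
    (h3x2 : ∀ a : Fin m, J3 (dxL m (a, 1)) = dyL m (a, 0))
    (h3y2 : ∀ a : Fin m, J3 (dyL m (a, 1)) = -dxL m (a, 0))
    (h3y1 : ∀ a : Fin m, J3 (dyL m (a, 0)) = -dxL m (a, 1))
    (h3θ : J3 (thetaL m p) = deL m 2)
    (h3e3 : J3 (deL m 2) = -thetaL m p)
    (h3e1 : J3 (deL m 0) = deL m 1)
    (h3e2 : J3 (deL m 1) = -deL m 0) :
    J2 (dzL m) = (fderiv ℝ (f2 m) p).toLinearMap ∧
    J3 (dzL m) = (fderiv ℝ (f3 m) p).toLinearMap := by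

  have hx : ∀ i, HasFDerivAt (fun q : Pt m => q.1 i) ((dxL m i).toContinuousLinearMap) p :=
    fun i => ((dxL m i).toContinuousLinearMap).hasFDerivAt
  have hy : ∀ i, HasFDerivAt (fun q : Pt m => q.2.1 i) ((dyL m i).toContinuousLinearMap) p :=
    fun i => ((dyL m i).toContinuousLinearMap).hasFDerivAt
  have he : ∀ k, HasFDerivAt (fun q : Pt m => q.2.2.2 k) ((deL m k).toContinuousLinearMap) p :=
    fun k => ((deL m k).toContinuousLinearMap).hasFDerivAt
  have hdz : dzL m = thetaL m p
      + (2 : ℝ) • ∑ i : Fin m × Fin 2, (p.2.1 i • dxL m i - p.1 i • dyL m i) := by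
    rw [thetaL]; abel
  constructor
  · -- I₂
    have hf2 := (he 1).fun_add (HasFDerivAt.fun_sum (u := Finset.univ) (fun (a : Fin m) _ =>
      ((((hy (a,0)).fun_mul (hy (a,0))).fun_add ((hx (a,0)).fun_mul (hx (a,0)))).fun_sub
        ((hy (a,1)).fun_mul (hy (a,1)))).fun_sub ((hx (a,1)).fun_mul (hx (a,1)))))
    have hform : f2 m = fun q : Pt m => q.2.2.2 1 + ∑ a : Fin m,
        (q.2.1 (a,0) * q.2.1 (a,0) + q.1 (a,0) * q.1 (a,0) - q.2.1 (a,1) * q.2.1 (a,1)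
          - q.1 (a,1) * q.1 (a,1)) := by
      funext q; simp [f2, pow_two]
    rw [hform, hf2.fderiv]
    rw [hdz, map_add, map_smul, map_sum, h2θ]
    simp only [map_sub, map_smul, Fintype.sum_prod_type, Fin.sum_univ_two,
      h2x1, h2x2, h2y1, h2y2]
    apply LinearMap.ext; intro v
    simp [dxL, dyL, deL, Finset.sum_apply, smul_sub, mul_comm]
    simp only [Finset.sum_add_distrib, Finset.sum_sub_distrib, Finset.sum_neg_distrib]
    ring
  · -- I₃
    have hf3 := (he 2).fun_add ((HasFDerivAt.fun_sum (u := Finset.univ) (fun (a : Fin m) _ =>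
      ((hy (a,0)).fun_mul (hy (a,1))).fun_add ((hx (a,0)).fun_mul (hx (a,1))))).const_mul (2 : ℝ))
    have hform : f3 m = fun q : Pt m => q.2.2.2 2 + 2 * ∑ a : Fin m,
        (q.2.1 (a,0) * q.2.1 (a,1) + q.1 (a,0) * q.1 (a,1)) := rfl
    rw [hform, hf3.fderiv]
    rw [hdz, map_add, map_smul, map_sum, h3θ]
    simp only [map_sub, map_smul, Fintype.sum_prod_type, Fin.sum_univ_two,
      h3x1, h3x2, h3y1, h3y2]
    apply LinearMap.ext; intro v
    simp [dxL, dyL, deL, Finset.sum_apply, smul_sub, mul_comm]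
    simp only [Finset.sum_add_distrib, Finset.sum_sub_distrib, Finset.sum_neg_distrib,
      Finset.mul_sum]
    ring
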